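/- With h := √(α² + 2σ²), define A(t,T) := ( 2h e^{(α+h)(T−t)/2} / (2h + (α+h)(e^{h(T−t)} − 1)) )^{2αβ/σ²} and B(t,T) as the standard CIR function. Then A solves ∂_t A(t,T) = αβ B(t,T) A(t,T) with A(T,T) = 1. -/

import Mathlib

/-- CIR Riccati function B(t,T) with h = √(α² + 2σ²). -/
noncomputable def Bcir (α σ T t : ℝ) : ℝ :=
  let h := Real.sqrt (α ^ 2 + 2 * σ ^ 2)
  2 * (Real.exp (h * (T - t)) - 1) / (2 * h + (α + h) * (Real.exp (h * (T - t)) - 1))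

/-- CIR function A(t,T) with h = √(α² + 2σ²). -/
noncomputable def Acir (α β σ T t : ℝ) : ℝ :=
  let h := Real.sqrt (α ^ 2 + 2 * σ ^ 2)
  (2 * h * Real.exp ((α + h) * (T - t) / 2)
      / (2 * h + (α + h) * (Real.exp (h * (T - t)) - 1))) ^ (2 * α * β / σ ^ 2 : ℝ)

/-- A solves ∂_t A(t,T) = αβ B(t,T) A(t,T) with A(T,T) = 1. -/
theorem stmt6 (α β σ T : ℝ) (hα : 0 < α) (hβ : 0 < β) (hσ : 0 < σ)
    (hFeller : 2 * α * β > σ ^ 2) (hT : 0 < T) :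
    (∀ t ∈ Set.Icc (0 : ℝ) T,
        HasDerivAt (Acir α β σ T) (α * β * Bcir α σ T t * Acir α β σ T t) t)
      ∧ Acir α β σ T T = 1 := by
  have hσ2 : (0:ℝ) < σ ^ 2 := by positivity
  set h : ℝ := Real.sqrt (α ^ 2 + 2 * σ ^ 2) with hh
  have hh2 : h ^ 2 = α ^ 2 + 2 * σ ^ 2 := Real.sq_sqrt (by positivity)
  have hhnn : 0 ≤ h := Real.sqrt_nonneg _
  have hαh : α < h := by nlinarith
  have hhpos : 0 < h := lt_trans hα hαh
  set p : ℝ := 2 * α * β / σ ^ 2 with hp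
  set N : ℝ → ℝ := fun t => 2 * h * Real.exp ((α + h) * (T - t) / 2) with hN
  set D : ℝ → ℝ := fun t => 2 * h + (α + h) * (Real.exp (h * (T - t)) - 1) with hD
  have hDpos : ∀ t, 0 < D t := by
    intro t
    have hE := Real.exp_pos (h * (T - t))
    simp only [hD]
    nlinarith
  have hNpos : ∀ t, 0 < N t := by
    intro t
    have := Real.exp_pos ((α + h) * (T - t) / 2)
    simp only [hN]; positivity
  have hfpos : ∀ t, 0 < N t / D t := fun t => div_pos (hNpos t) (hDpos t)
  have hAeq : Acir α β σ T = fun t => (N t / D t) ^ p := by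
    funext t
    simp only [Acir, hN, hD, hp, hh]
  have hBeq : ∀ t, Bcir α σ T t
      = 2 * (Real.exp (h * (T - t)) - 1) / D t := by
    intro t
    simp only [Bcir, hD, hh]
  constructor
  · intro t _
    -- derivative of N
    have hτ : HasDerivAt (fun t : ℝ => T - t) (-1) t := by
      simpa using (hasDerivAt_id t).const_sub T
    have hNd : HasDerivAt N (2 * h * (Real.exp ((α + h) * (T - t) / 2)
        * ((α + h) * (-1) / 2))) t := by
      exact (((hτ.const_mul (α + h)).div_const 2).exp).const_mul (2 * h)
    have hDd : HasDerivAt D ((α + h) * (Real.exp (h * (T - t)) * (h * (-1)))) t := by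
      exact ((((hτ.const_mul h).exp).sub_const 1).const_mul (α + h)).const_add (2 * h)
    have hfd := hNd.div hDd (ne_of_gt (hDpos t))
    have hAd := hfd.rpow_const (p := p) (Or.inl (ne_of_gt (hfpos t)))
    simp only [hAeq, hBeq]
    convert hAd using 1
    · rfl
    simp only [Pi.div_apply]
    -- algebraic identity
    have hfe : (N t / D t) ^ (p - 1) = (N t / D t) ^ p / (N t / D t) := by
      rw [Real.rpow_sub (hfpos t), Real.rpow_one]
    rw [hfe]
    have hDne : (2 * h + (α + h) * (Real.exp (h * (T - t)) - 1)) ≠ 0 := by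
      have := hDpos t; simp only [hD] at this; exact ne_of_gt this
    have hσ2' : σ ^ 2 = (h ^ 2 - α ^ 2) / 2 := by linarith [hh2]
    have hha : h ^ 2 - α ^ 2 ≠ 0 := by nlinarith
    simp only [hN, hD]
    set E := Real.exp (h * (T - t)) with hE
    set F := Real.exp ((α + h) * (T - t) / 2) with hF
    have hFne : F ≠ 0 := ne_of_gt (Real.exp_pos _)
    rw [hp, hσ2']
    field_simp
    ring
  · rw [hAeq]
    have h1 : N T / D T = 1 := by
      simp only [hN, hD, sub_self, mul_zero, zero_div, Real.exp_zero, mul_one, sub_self,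
        zero_mul, add_zero]
      exact div_self (by positivity)
    show (N T / D T) ^ p = 1
    rw [h1, Real.one_rpow]
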